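/- Let T = 2^ℓ, let 0 ≤ r < T, and let Seg(r) = (S_1, …, S_m) in order of construction. Then l(S_1) = 1; for every 1 ≤ i < m, l(S_{i+1}) equals either l(S_i) or 2·l(S_i) (in particular the lengths are non-decreasing); and for every nonnegative integer s, at most two segments of Seg(r) have length 2^s. -/

import Mathlib

/-- The procedure `FormSegments`, starting at stage `s` with current time `t`, stopping
once `t ≥ T`.  Each produced entry `(s, a, b)` records the stage `s` at which the
interval `[a, b]` was appended. -/
def segAux (T : ℕ) (s t : ℕ) : List (ℕ × ℕ × ℕ) :=
  if h : t < T then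
    if 2 ^ (s + 1) ∣ t then
      (s, t, t + 2 ^ s) :: (s, t + 2 ^ s, t + 2 ^ (s + 1)) ::
        segAux T (s + 1) (t + 2 ^ (s + 1))
    else
      (s, t, t + 2 ^ s) :: segAux T (s + 1) (t + 2 ^ s)
  else []
termination_by T - t
decreasing_by
  · have h1 : 0 < 2 ^ (s + 1) := Nat.pow_pos (by norm_num)
    omega
  · have h1 : 0 < 2 ^ s := Nat.pow_pos (by norm_num)
    omega

/-- `Seg T r` : the sequence of intervals of `Seg(r)` (forgetting the stages). -/
def Seg (T rj : ℕ) : List (ℕ × ℕ) := (segAux T 0 rj).map fun x => (x.2.1, x.2.2)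

theorem segAux_mem (T : ℕ) : ∀ s t : ℕ, ∀ x ∈ segAux T s t, s ≤ x.1 ∧ x.2.2 - x.2.1 = 2 ^ x.1 := by
  intro s t
  induction s, t using segAux.induct (T := T) with
  | case1 s t h hd ih =>
    rw [segAux, dif_pos h, if_pos hd]
    intro x hx
    simp only [List.mem_cons] at hx
    rcases hx with rfl | rfl | hx
    · exact ⟨le_refl _, by simp⟩
    · refine ⟨le_refl _, ?_⟩
      simp only [pow_succ]; omega
    · exact ⟨(ih x hx).1.trans' (by omega), (ih x hx).2⟩
  | case2 s t h hd ih =>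
    rw [segAux, dif_pos h, if_neg hd]
    intro x hx
    simp only [List.mem_cons] at hx
    rcases hx with rfl | hx
    · exact ⟨le_refl _, by simp⟩
    · exact ⟨(ih x hx).1.trans' (by omega), (ih x hx).2⟩
  | case3 s t h =>
    rw [segAux, dif_neg h]; simp

theorem segAux_head (T s t : ℕ) (h : t < T) :
    ∃ l, segAux T s t = (s, t, t + 2 ^ s) :: l := by
  rw [segAux, dif_pos h]
  split <;> exact ⟨_, rfl⟩

theorem segAux_count (T : ℕ) (s0 : ℕ) : ∀ s t : ℕ,
    (segAux T s t).countP (fun x => decide (x.1 = s0)) ≤ 2 := by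
  have hzero : ∀ s t : ℕ, s0 < s → (segAux T s t).countP (fun x => decide (x.1 = s0)) = 0 := by
    intro s t hs
    rw [List.countP_eq_zero]
    intro x hx
    have := (segAux_mem T s t x hx).1
    simp only [decide_eq_true_eq]
    omega
  intro s t
  induction s, t using segAux.induct (T := T) with
  | case1 s t h hd ih =>
    rw [segAux, dif_pos h, if_pos hd]
    simp only [List.countP_cons, decide_eq_true_eq]
    rcases Nat.lt_or_ge s0 (s + 1) with h2 | h2
    · have h0 := hzero (s + 1) (t + 2 ^ (s + 1)) h2
      split_ifs <;> omega
    · have h3 : ¬ s = s0 := by omega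
      split_ifs <;> omega
  | case2 s t h hd ih =>
    rw [segAux, dif_pos h, if_neg hd]
    simp only [List.countP_cons, decide_eq_true_eq]
    rcases Nat.lt_or_ge s0 (s + 1) with h2 | h2
    · have h0 := hzero (s + 1) (t + 2 ^ s) h2
      split_ifs <;> omega
    · have h3 : ¬ s = s0 := by omega
      split_ifs <;> omega
  | case3 s t h =>
    rw [segAux, dif_neg h]; simp

theorem segAux_chain_len (T : ℕ) : ∀ s t : ℕ,
    List.Chain' (fun x y : ℕ × ℕ × ℕ =>
      y.2.2 - y.2.1 = x.2.2 - x.2.1 ∨ y.2.2 - y.2.1 = 2 * (x.2.2 - x.2.1)) (segAux T s t) := by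
  intro s t
  induction s, t using segAux.induct (T := T) with
  | case1 s t h hd ih =>
    rw [segAux, dif_pos h, if_pos hd]
    have hp : (2 : ℕ) ^ (s + 1) = 2 * 2 ^ s := by rw [pow_succ]; ring
    refine List.IsChain.cons_cons (Or.inl (by simp; omega)) ?_
    rcases Nat.lt_or_ge (t + 2 ^ (s + 1)) T with h2 | h2
    · obtain ⟨l, hl⟩ := segAux_head T (s + 1) (t + 2 ^ (s + 1)) h2
      rw [hl] at ih ⊢
      refine List.IsChain.cons_cons (Or.inr ?_) ih
      simp; omega
    · rw [segAux, dif_neg (by omega)]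
      exact List.isChain_singleton _
  | case2 s t h hd ih =>
    rw [segAux, dif_pos h, if_neg hd]
    have hp : (2 : ℕ) ^ (s + 1) = 2 * 2 ^ s := by rw [pow_succ]; ring
    rcases Nat.lt_or_ge (t + 2 ^ s) T with h2 | h2
    · obtain ⟨l, hl⟩ := segAux_head T (s + 1) (t + 2 ^ s) h2
      rw [hl] at ih ⊢
      refine List.IsChain.cons_cons (Or.inr ?_) ih
      simp; omega
    · rw [segAux, dif_neg (by omega)]
      exact List.isChain_singleton _
  | case3 s t h =>
    rw [segAux, dif_neg h]; exact List.isChain_nil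

/-- for `T = 2^ℓ` and `0 ≤ r < T`, writing `Seg(r) = (S_1, …, S_m)` in
order of construction: `l(S_1) = 1`; each `l(S_{i+1})` is either `l(S_i)` or
`2·l(S_i)` (so lengths are non-decreasing); and for every `s` at most two segments
have length `2^s`. -/
theorem stmt7 (ℓ r : ℕ) (hr : r < 2 ^ ℓ) :
    (∃ hne : Seg (2 ^ ℓ) r ≠ [],
      ((Seg (2 ^ ℓ) r).head hne).2 - ((Seg (2 ^ ℓ) r).head hne).1 = 1) ∧
    List.Chain' (fun S S' : ℕ × ℕ =>
      S'.2 - S'.1 = S.2 - S.1 ∨ S'.2 - S'.1 = 2 * (S.2 - S.1)) (Seg (2 ^ ℓ) r) ∧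
    ∀ s : ℕ, (Seg (2 ^ ℓ) r).countP (fun S => decide (S.2 - S.1 = 2 ^ s)) ≤ 2 := by
  obtain ⟨l, hl⟩ := segAux_head (2 ^ ℓ) 0 r hr
  refine ⟨?_, ?_, ?_⟩
  · have hne : Seg (2 ^ ℓ) r ≠ [] := by
      rw [Seg, hl]; simp
    refine ⟨hne, ?_⟩
    have : Seg (2 ^ ℓ) r = (r, r + 2 ^ 0) :: l.map fun x => (x.2.1, x.2.2) := by
      rw [Seg, hl]; rfl
    simp [this]
  · rw [Seg]
    exact (List.isChain_map _).mpr (segAux_chain_len (2 ^ ℓ) 0 r)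
  · intro s
    rw [Seg, List.countP_map]
    calc (segAux (2 ^ ℓ) 0 r).countP
          ((fun S : ℕ × ℕ => decide (S.2 - S.1 = 2 ^ s)) ∘ fun x => (x.2.1, x.2.2))
        ≤ (segAux (2 ^ ℓ) 0 r).countP (fun x => decide (x.1 = s)) := by
          apply List.countP_mono_left
          intro x hx hpx
          have hm := (segAux_mem (2 ^ ℓ) 0 r x hx).2
          simp only [Function.comp_apply, decide_eq_true_eq] at hpx ⊢
          have : (2 : ℕ) ^ x.1 = 2 ^ s := by omega
          exact Nat.pow_right_injective (by norm_num) this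
      _ ≤ 2 := segAux_count (2 ^ ℓ) s 0 r
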